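/- Let k be a field and C a k-linear abelian symmetric monoidal category which admits all small colimits, in which the tensor product commutes with small colimits in each variable, and for which the canonical ring homomorphism k → End_C(𝟙) is bijective. Assume C is pointed, i.e. there exist a ring R and a faithful exact k-linear monoidal functor ϑ : C → Mod(R) preserving small colimits. Then every k-linear monoidal functor τ : Mod(k) → C preserving small colimits is faithful and exact. (The paper's Proposition that the trivial-object functor is faithful exact when C is pointed.) -/

import Mathlib

open CategoryTheory CategoryTheory.Limits CategoryTheory.MonoidalCategory

universe v u w

/-- The inclusion of the concrete kernel, as a morphism in `ModuleCat`. -/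
def kerIncl {k : Type u} [Field k] {M N : ModuleCat.{u} k} (f : M ⟶ N) :
    ModuleCat.of k (LinearMap.ker f.hom) ⟶ M :=
  ModuleCat.ofHom (LinearMap.ker f.hom).subtype

/-- Splitting data for the kernel of a linear map over a field. -/
lemma split_kernel_data {k : Type u} [Field k] {M N : ModuleCat.{u} k} (f : M ⟶ N) :
    ∃ (r : M ⟶ ModuleCat.of k (LinearMap.ker f.hom)) (g : N ⟶ M),
      kerIncl f ≫ r = 𝟙 _ ∧ f ≫ g = 𝟙 M - r ≫ kerIncl f := by
  obtain ⟨W, hW⟩ := Submodule.exists_isCompl (LinearMap.ker f.hom)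
  set r0 := (LinearMap.ker f.hom).linearProjOfIsCompl W hW with hr0
  have hinj : LinearMap.ker (f.hom.comp W.subtype) = ⊥ := by
    rw [LinearMap.ker_comp, Submodule.eq_bot_iff]
    intro x hx
    simp only [Submodule.mem_comap] at hx
    have := hW.disjoint
    rw [Submodule.disjoint_def] at this
    exact Subtype.ext (this x hx x.2)
  obtain ⟨g₁, hg₁⟩ := (f.hom.comp W.subtype).exists_leftInverse_of_injective hinj
  refine ⟨(show M ⟶ ModuleCat.of k (LinearMap.ker f.hom) from ModuleCat.ofHom r0),
      (show N ⟶ M from ModuleCat.ofHom (W.subtype.comp g₁)), ?_, ?_⟩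
  · ext x
    show ((r0 ((LinearMap.ker f.hom).subtype x) : LinearMap.ker f.hom) : M) = x
    exact congrArg Subtype.val (Submodule.linearProjOfIsCompl_apply_left hW x)
  · ext x
    have hw : x - ((r0 x : M)) ∈ W := by
      rw [← Submodule.linearProjOfIsCompl_apply_eq_zero_iff (p := LinearMap.ker f.hom) hW]
      simp [hr0, Submodule.linearProjOfIsCompl, Submodule.projectionOnto_apply_left, Submodule.projectionOnto_projection]
    have hfx : f x = f (x - (r0 x : M)) := by
      have h0 : f ((r0 x : M)) = 0 := (r0 x).2
      simp [map_sub, h0]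
    have key : g₁ (f x) = ⟨x - (r0 x : M), hw⟩ := by
      rw [hfx]
      have := LinearMap.congr_fun hg₁ (⟨x - (r0 x : M), hw⟩ : W)
      simpa using this
    show W.subtype (g₁ (f x)) = (𝟙 M - (show M ⟶ ModuleCat.of k (LinearMap.ker f.hom) from ModuleCat.ofHom r0) ≫ kerIncl f) x
    rw [key]
    show x - (r0 x : M) = (𝟙 M) x - ((show M ⟶ ModuleCat.of k (LinearMap.ker f.hom) from ModuleCat.ofHom r0) ≫ kerIncl f) x
    rfl

/-- **Proposition 2.6 of Nagy–Szamuely**: if `C` is pointed, i.e. there is a faithful exact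
`k`-linear monoidal functor `ϑ : C ⥤ Mod(R)` preserving small colimits for some
(commutative) ring `R`, then every `k`-linear colimit-preserving monoidal functor
`τ : Mod(k) ⥤ C` is faithful and exact. -/
theorem stmt3 (k : Type u) [Field k]
    (C : Type v) [Category.{u} C] [Abelian C] [CategoryTheory.Linear k C]
    [MonoidalCategory C] [SymmetricCategory C] [HasColimits C]
    [∀ X : C, PreservesColimits (tensorLeft X)]
    [∀ X : C, PreservesColimits (tensorRight X)]
    (hk : Function.Bijective (fun a : k => a • (𝟙 (𝟙_ C))))
    -- `C` is pointed by a faithful exact `k`-linear monoidal functor to `Mod(R)`: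
    (R : Type w) [CommRing R] [Algebra k R]
    (ϑ : C ⥤ ModuleCat.{w} R) [ϑ.Monoidal] [ϑ.Additive] [ϑ.Linear k]
    [ϑ.Faithful] [PreservesFiniteLimits ϑ] [PreservesFiniteColimits ϑ]
    [PreservesColimits ϑ]
    (τ : ModuleCat.{u} k ⥤ C) [τ.Monoidal] [τ.Additive] [τ.Linear k]
    [PreservesColimits τ] :
    τ.Faithful ∧ PreservesFiniteLimits τ ∧ PreservesFiniteColimits τ := by
  -- τ preserves all kernels
  have hker : ∀ {M N : ModuleCat.{u} k} (f : M ⟶ N), PreservesLimit (parallelPair f 0) τ := by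
    intro M N f
    obtain ⟨r, g, hri, hfg⟩ := split_kernel_data f
    apply preservesLimit_of_preserves_limit_cone (ModuleCat.kernelIsLimit f)
    have hw : kerIncl f ≫ f = 0 := by
      ext x
      exact x.2
    refine (isLimitMapConeForkEquiv' τ hw).symm ?_
    have : IsSplitMono (τ.map (kerIncl f)) :=
      ⟨⟨⟨τ.map r, by rw [← τ.map_comp, hri, τ.map_id]⟩⟩⟩
    have hC : τ.map f ≫ τ.map g = 𝟙 (τ.obj M) - τ.map r ≫ τ.map (kerIncl f) := by
      rw [← τ.map_comp, ← τ.map_comp, hfg, Functor.map_sub, τ.map_id, τ.map_comp]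
    refine KernelFork.IsLimit.ofι' (τ.map (kerIncl f)) _ (fun {A} l hl => ⟨l ≫ τ.map r, ?_⟩)
    have : l ≫ τ.map f ≫ τ.map g = 0 := by
      rw [← Category.assoc, hl, zero_comp]
    calc (l ≫ τ.map r) ≫ τ.map (kerIncl f)
        = l ≫ (𝟙 (τ.obj M) - (𝟙 (τ.obj M) - τ.map r ≫ τ.map (kerIncl f))) := by
          simp [Preadditive.comp_sub]
      _ = l ≫ (𝟙 (τ.obj M)) - l ≫ τ.map f ≫ τ.map g := by rw [hC, Preadditive.comp_sub]
      _ = l := by rw [this, sub_zero, Category.comp_id]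
  haveI : ∀ {X Y : ModuleCat.{u} k} (f : X ⟶ Y), PreservesLimit (parallelPair f 0) τ :=
    fun f => hker f
  have hfl : PreservesFiniteLimits τ := Functor.preservesFiniteLimits_of_preservesKernels τ
  have hfaith : τ.Faithful := by
    refine ⟨fun {M N f g} h => ?_⟩
    by_contra hne
    have hx : ∃ x : M, (f - g) x ≠ 0 := by
      by_contra hall
      push_neg at hall
      refine hne (by ext x; have := hall x; change (f.hom - g.hom) x = 0 at this; rwa [LinearMap.sub_apply, sub_eq_zero] at this)
    obtain ⟨x, hdx⟩ := hx
    set d : M ⟶ N := f - g with hd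
    have hτd : τ.map d = 0 := by rw [hd, Functor.map_sub, h, sub_self]
    let a : 𝟙_ (ModuleCat.{u} k) ⟶ M :=
      show ModuleCat.of k k ⟶ M from ModuleCat.ofHom (LinearMap.toSpanSingleton k M x)
    obtain ⟨b₁, hb₁⟩ := (LinearMap.toSpanSingleton k N (d x)).exists_leftInverse_of_injective
      (LinearMap.ker_toSpanSingleton (R := k) (M := N) hdx)
    let b : N ⟶ 𝟙_ (ModuleCat.{u} k) := show N ⟶ ModuleCat.of k k from ModuleCat.ofHom b₁
    have habd : a ≫ d ≫ b = 𝟙 (𝟙_ (ModuleCat.{u} k)) := by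
      apply ModuleCat.hom_ext
      apply LinearMap.ext_ring
      show b₁ (d (LinearMap.toSpanSingleton k M x 1)) = 1
      rw [LinearMap.toSpanSingleton_apply_one]
      have := LinearMap.congr_fun hb₁ 1
      simpa [LinearMap.toSpanSingleton_apply_one] using this
    have hzero : 𝟙 (τ.obj (𝟙_ (ModuleCat.{u} k))) = 0 := by
      rw [← τ.map_id, ← habd, τ.map_comp, τ.map_comp, hτd, zero_comp, comp_zero]
    have hunit : 𝟙 (𝟙_ C) = 0 := by
      have e : 𝟙_ C ≅ τ.obj (𝟙_ (ModuleCat.{u} k)) := Functor.Monoidal.εIso τ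
      calc 𝟙 (𝟙_ C) = e.hom ≫ 𝟙 _ ≫ e.inv := by simp
        _ = 0 := by rw [hzero]; simp
    have h10 : (1 : k) = 0 := by
      apply hk.injective
      simp only [one_smul, zero_smul, hunit]
    exact one_ne_zero h10
  exact ⟨hfaith, hfl, inferInstance⟩
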